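/- Let 1 < p < ∞, v a weight sequence with (v_{n+1}/v_n) bounded, and r, s nonzero reals. Then the point spectrum of B(r,s) on l_p(v) is empty; i.e., B(r,s) - αI is injective on l_p(v) for every α ∈ ℂ. -/
import Mathlib


/-- The generalized difference operator `B(r,s)` on sequences:
`(B(r,s)x)_n = s x_{n-1} + r x_n` with `x_{-1} := 0`. -/
def Bop (r s : ℝ) (x : ℕ → ℂ) : ℕ → ℂ
  | 0 => (r : ℂ) * x 0
  | (n + 1) => (s : ℂ) * x n + (r : ℂ) * x (n + 1)

/-- For `1 < p < ∞`, a weight `v` with `(v_{n+1}/v_n)` bounded and nonzero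
reals `r, s`, the point spectrum of `B(r,s)` on `l_p(v)` is empty: for every `α ∈ ℂ`,
the operator `B(r,s) - αI` is injective on `l_p(v)`. -/
theorem stmt6 (p : ℝ) (hp : 1 < p) (v : ℕ → ℝ) (hv : ∀ n, 0 < v n)
    (hbd : ∃ M : ℝ, ∀ n, v (n + 1) / v n ≤ M)
    (r s : ℝ) (hr : r ≠ 0) (hs : s ≠ 0) (α : ℂ) (x : ℕ → ℂ)
    (hx : Summable fun n => (‖x n‖ * v n) ^ p)
    (heig : ∀ n, Bop r s x n = α * x n) : x = 0 := by
  suffices hz : ∀ n, x n = 0 by funext n; simpa using hz n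
  by_cases hα : α = (r : ℂ)
  · intro n
    have h := heig (n + 1)
    simp only [Bop, hα] at h
    have : (s : ℂ) * x n = 0 := by linear_combination h
    have hs' : (s : ℂ) ≠ 0 := by exact_mod_cast hs
    simpa [hs'] using this
  · intro n
    induction n with
    | zero =>
      have h := heig 0
      simp only [Bop] at h
      have : ((r : ℂ) - α) * x 0 = 0 := by linear_combination h
      rcases mul_eq_zero.mp this with h' | h'
      · exact absurd (by linear_combination -h') hα
      · simpa using h'
    | succ n ih =>
      have h := heig (n + 1)
      simp only [Bop, ih, mul_zero, zero_add] at h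
      have : ((r : ℂ) - α) * x (n + 1) = 0 := by linear_combination h
      rcases mul_eq_zero.mp this with h' | h'
      · exact absurd (by linear_combination -h') hα
      · simpa using h'
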